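/- Every cluster Z ∈ 𝐙 admits an enumeration z_1, …, z_n of its elements such that every prefix {z_1, …, z_i} (1 ≤ i ≤ n) is itself a cluster; equivalently, C_{z_i} ∩ C^T({z_1, …, z_{i−1}}) ≠ ∅ for every 2 ≤ i ≤ n. -/

import Mathlib

open Finset

variable {V : Type*} [Fintype V] [DecidableEq V]

/-- The total coverage zone `C^T(X) = ⋃_{x ∈ X} C_x`. -/
def totCov (C : V → Finset V) (X : Finset V) : Finset V := X.biUnion C

/-- `Z ∈ 𝐙`: a cluster is a non-empty set every non-empty proper subset of which
interferes with its complement in the cluster. -/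
def IsCluster (C : V → Finset V) (Z : Finset V) : Prop :=
  Z.Nonempty ∧ ∀ z ⊆ Z, z.Nonempty → z ≠ Z →
    (totCov C z ∩ totCov C (Z \ z)).Nonempty

lemma totCov_mono (C : V → Finset V) {X Y : Finset V} (h : X ⊆ Y) :
    totCov C X ⊆ totCov C Y := Finset.biUnion_subset_biUnion_of_subset_left _ h

lemma subset_totCov (C : V → Finset V) (hC : ∀ i, i ∈ C i) {X : Finset V} {x : V}
    (hx : x ∈ X) : C x ⊆ totCov C X := fun p hp => Finset.mem_biUnion.2 ⟨x, hx, hp⟩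

/-- interference property of a list -/
def IntProp (C : V → Finset V) (l : List V) : Prop :=
  ∀ j : ℕ, (h : j < l.length) → 1 ≤ j →
    (C l[j] ∩ totCov C (l.take j).toFinset).Nonempty

lemma mem_take_toFinset {l : List V} {k : ℕ} {x : V} :
    x ∈ (l.take k).toFinset ↔ ∃ j : ℕ, ∃ h : j < l.length, j < k ∧ l[j] = x := by
  rw [List.mem_toFinset, List.mem_iff_getElem]
  constructor
  · rintro ⟨j, hj, rfl⟩
    have hjl : j < l.length := lt_of_lt_of_le hj (by simp [List.length_take])
    have hjk : j < k := by simp [List.length_take] at hj; omega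
    exact ⟨j, hjl, hjk, (List.getElem_take ..).symm⟩
  · rintro ⟨j, hj, hjk, rfl⟩
    have hjt : j < (l.take k).length := by simp only [List.length_take]; omega
    exact ⟨j, hjt, List.getElem_take ..⟩

lemma prefix_cluster (C : V → Finset V) (hC : ∀ i, i ∈ C i) (l : List V)
    (hint : IntProp C l) (i : ℕ) (hi1 : 1 ≤ i) (hi2 : i ≤ l.length) :
    IsCluster C (l.take i).toFinset := by
  set P := (l.take i).toFinset with hP
  have h0l : 0 < l.length := lt_of_lt_of_le hi1 hi2
  have h0P : l[0] ∈ P := mem_take_toFinset.2 ⟨0, h0l, hi1, rfl⟩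
  refine ⟨⟨l[0], h0P⟩, ?_⟩
  intro z hz hzne hzP
  set w := P \ z with hw
  have hwne : w.Nonempty := by
    rw [Finset.sdiff_nonempty]
    intro hc
    exact hzP (Finset.Subset.antisymm hz hc)
  have hdisj : ∀ x, x ∈ z → x ∈ w → False := by
    intro x hxz hxw
    exact (Finset.mem_sdiff.1 hxw).2 hxz
  have hcover : ∀ x ∈ P, x ∈ z ∨ x ∈ w := by
    intro x hx
    by_cases h : x ∈ z
    · exact Or.inl h
    · exact Or.inr (Finset.mem_sdiff.2 ⟨hx, h⟩)
  -- A = side of l[0], B = other side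
  obtain ⟨A, B, hA0, hABz, hcovAB, hdisjAB, hgoal⟩ :
      ∃ A B : Finset V, l[0] ∈ A ∧ (A = z ∧ B = w ∨ A = w ∧ B = z) ∧
        (∀ x ∈ P, x ∈ A ∨ x ∈ B) ∧ (∀ x, x ∈ A → x ∈ B → False) ∧
        ((totCov C A ∩ totCov C B).Nonempty → (totCov C z ∩ totCov C w).Nonempty) := by
    by_cases h : l[0] ∈ z
    · exact ⟨z, w, h, Or.inl ⟨rfl, rfl⟩, hcover, hdisj, id⟩
    · refine ⟨w, z, Finset.mem_sdiff.2 ⟨h0P, h⟩, Or.inr ⟨rfl, rfl⟩,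
        fun x hx => (hcover x hx).symm, fun x h1 h2 => hdisj x h2 h1, fun ⟨p, hp⟩ => ?_⟩
      rw [Finset.mem_inter] at hp
      exact ⟨p, Finset.mem_inter.2 ⟨hp.2, hp.1⟩⟩
  have hBsub : B ⊆ P := by
    rcases hABz with ⟨_, rfl⟩ | ⟨_, rfl⟩
    · exact Finset.sdiff_subset
    · exact hz
  -- exists an index in B
  have hBne : B.Nonempty := by
    rcases hABz with ⟨_, rfl⟩ | ⟨_, rfl⟩
    · exact hwne
    · exact hzne
  obtain ⟨b, hb⟩ := hBne
  obtain ⟨j0, hj0l, hj0i, hj0b⟩ := mem_take_toFinset.1 (hBsub hb)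
  have hQ : ∃ j : ℕ, ∃ h : j < l.length, j < i ∧ l[j] ∈ B := ⟨j0, hj0l, hj0i, hj0b ▸ hb⟩
  classical
  let Q : ℕ → Prop := fun j => ∃ h : j < l.length, j < i ∧ l[j] ∈ B
  have hQ' : ∃ j, Q j := hQ
  let k := Nat.find hQ'
  obtain ⟨hkl, hki, hkB⟩ : Q k := Nat.find_spec hQ'
  have hk1 : 1 ≤ k := by
    rcases Nat.eq_zero_or_pos k with h | h
    · exfalso
      have h0 : Q 0 := by rw [← h]; exact Nat.find_spec hQ'
      obtain ⟨hl0, -, hB0⟩ := h0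
      exact hdisjAB _ hA0 hB0
    · exact h
  -- all indices below k are in A
  have hpre : (l.take k).toFinset ⊆ A := by
    intro x hx
    obtain ⟨j, hjl, hjk, rfl⟩ := mem_take_toFinset.1 hx
    have hjP : l[j] ∈ P := mem_take_toFinset.2 ⟨j, hjl, by omega, rfl⟩
    rcases hcovAB _ hjP with h | h
    · exact h
    · exact absurd ⟨hjl, by omega, h⟩ (Nat.find_min hQ' hjk)
  obtain ⟨p, hp⟩ := hint k hkl hk1
  rw [Finset.mem_inter] at hp
  have hpB : p ∈ totCov C B := subset_totCov C hC hkB hp.1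
  have hpA : p ∈ totCov C A := totCov_mono C hpre hp.2
  have hzw : (totCov C z ∩ totCov C w).Nonempty :=
    hgoal ⟨p, Finset.mem_inter.2 ⟨hpA, hpB⟩⟩
  exact hzw

lemma extend_step (C : V → Finset V) (Z : Finset V) (hZ : IsCluster C Z) :
    ∀ n : ℕ, ∀ l : List V, l.Nodup → l.toFinset ⊆ Z → l.toFinset.Nonempty →
      (Z \ l.toFinset).card = n → IntProp C l →
      ∃ l' : List V, l'.Nodup ∧ l'.toFinset = Z ∧ IntProp C l' := by
  intro n
  induction n with
  | zero =>
    intro l hnd hsub hne hcard hint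
    refine ⟨l, hnd, ?_, hint⟩
    have : Z \ l.toFinset = ∅ := Finset.card_eq_zero.1 hcard
    exact Finset.Subset.antisymm hsub (Finset.sdiff_eq_empty_iff_subset.1 this)
  | succ n ih =>
    intro l hnd hsub hne hcard hint
    have hne' : (Z \ l.toFinset).Nonempty := by
      rw [← Finset.card_pos, hcard]; omega
    have hPZ : l.toFinset ≠ Z := by
      intro h
      rw [h, Finset.sdiff_self] at hne'
      exact Finset.not_nonempty_empty hne'
    obtain ⟨p, hp⟩ := hZ.2 l.toFinset hsub hne hPZ
    rw [Finset.mem_inter] at hp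
    obtain ⟨b, hbZ, hpb⟩ := Finset.mem_biUnion.1 hp.2
    have hbnl : b ∉ l := by
      intro h
      exact (Finset.mem_sdiff.1 hbZ).2 (List.mem_toFinset.2 h)
    have hprop : (C b ∩ totCov C l.toFinset).Nonempty := ⟨p, Finset.mem_inter.2 ⟨hpb, hp.1⟩⟩
    refine ih (l ++ [b]) ?_ ?_ ?_ ?_ ?_
    · simp [List.nodup_append, hnd, hbnl]
      rintro a ha rfl; exact hbnl ha
    · simp only [List.toFinset_append, List.toFinset_cons, List.toFinset_nil]
      intro x hx
      rcases Finset.mem_union.1 hx with h | h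
      · exact hsub h
      · simp at h
        subst h
        exact (Finset.mem_sdiff.1 hbZ).1
    · obtain ⟨x, hx⟩ := hne
      exact ⟨x, by simp at hx ⊢; tauto⟩
    · have : (l ++ [b]).toFinset = insert b l.toFinset := by
        simp only [List.toFinset_append, List.toFinset_cons, List.toFinset_nil]
        rw [Finset.union_comm]
        ext x; simp
      rw [this]
      rw [Finset.sdiff_insert]
      rw [Finset.card_erase_of_mem (by exact Finset.mem_sdiff.2 ⟨(Finset.mem_sdiff.1 hbZ).1, (Finset.mem_sdiff.1 hbZ).2⟩)]
      omega
    · intro j hj hj1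
      simp only [List.length_append, List.length_cons, List.length_nil] at hj
      rcases Nat.lt_or_ge j l.length with h | h
      · have e1 : (l ++ [b])[j] = l[j] := List.getElem_append_left h
        have e2 : (l ++ [b]).take j = l.take j := List.take_append_of_le_length (le_of_lt h)
        rw [e1, e2]
        exact hint j h hj1
      · have hj' : j = l.length := by omega
        subst hj'
        have e1 : (l ++ [b])[l.length] = b := by
          rw [List.getElem_append_right (le_refl _)]
          simp
        have e2 : (l ++ [b]).take l.length = l := by
          rw [List.take_append_of_le_length (le_refl _)]
          simp
        rw [e1, e2]
        exact hprop

theorem stmt15 (C : V → Finset V) (hC : ∀ i, i ∈ C i) (Z : Finset V)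
    (hZ : IsCluster C Z) :
    ∃ l : List V, l.Nodup ∧ l.toFinset = Z ∧
      -- every prefix is itself a cluster ...
      (∀ i : ℕ, 1 ≤ i → i ≤ l.length → IsCluster C (l.take i).toFinset) ∧
      -- ... equivalently, each device interferes with the preceding prefix
      (∀ i : Fin l.length, 1 ≤ (i : ℕ) →
        (C (l.get i) ∩ totCov C (l.take (i : ℕ)).toFinset).Nonempty) := by
  obtain ⟨z0, hz0⟩ := hZ.1
  have hint0 : IntProp C [z0] := by
    intro j hj hj1
    simp at hj
    omega
  obtain ⟨l, hnd, hlZ, hint⟩ := extend_step C Z hZ (Z \ [z0].toFinset).card [z0]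
    (by simp) (by simp [hz0]) (by simp) rfl hint0
  refine ⟨l, hnd, hlZ, ?_, ?_⟩
  · intro i hi1 hi2
    exact prefix_cluster C hC l hint i hi1 hi2
  · intro i hi1
    exact hint i i.isLt hi1
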